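/- Let n, k be integers with 0 < k < n, and let c_1 ≥ c_2 ≥ ... ≥ c_k be nonnegative integers with n ≥ c_1 + ... + c_{k-1} and n ≤ c_1 + ... + c_k. Then the number of tuples (x_1, ..., x_k) of nonnegative integers with 0 ≤ x_i ≤ c_i for all i and x_1 + ... + x_k = n equals C(k - 1 + (c_1 + ... + c_k) - n, k - 1). -/

import Mathlib

/-- Balls into boxes with capacities. -/
theorem balls_in_boxes (n k : ℕ) (hk : 0 < k) (hkn : k < n) (c : Fin k → ℕ)
    (hmono : ∀ i j : Fin k, i ≤ j → c j ≤ c i)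
    (hlow : ∑ i ∈ Finset.univ.erase (⟨k - 1, Nat.sub_lt hk Nat.one_pos⟩ : Fin k), c i ≤ n)
    (hhigh : n ≤ ∑ i, c i) :
    ((Finset.Icc (0 : Fin k → ℕ) c).filter (fun x => ∑ i, x i = n)).card =
      (k - 1 + (∑ i, c i) - n).choose (k - 1) := by
  classical
  set last : Fin k := ⟨k - 1, Nat.sub_lt hk Nat.one_pos⟩ with hlastdef
  set S := ∑ i, c i with hS
  set m := S - n with hm
  clear_value last S m
  -- every index is ≤ last
  have hle_last : ∀ i : Fin k, i ≤ last := by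
    intro i
    have h := i.isLt
    rw [hlastdef, Fin.le_def]
    simp only []
    omega
  -- S ≤ n + c last
  have hSsplit : S = (∑ i ∈ Finset.univ.erase last, c i) + c last := by
    rw [hS, ← Finset.sum_erase_add Finset.univ c (Finset.mem_univ last)]
  have hmc : ∀ i : Fin k, m ≤ c i := by
    intro i
    have h1 : m ≤ c last := by omega
    exact h1.trans (hmono i last (hle_last i))
  -- the equiv
  have hsum_sub : ∀ x : Fin k → ℕ, (∀ i, x i ≤ c i) →
      ∑ i, (c i - x i) = S - ∑ i, x i := by
    intro x hx
    have h1 : ∑ i, (c i - x i) + ∑ i, x i = S := by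
      rw [← Finset.sum_add_distrib, hS]
      exact Finset.sum_congr rfl fun i _ => Nat.sub_add_cancel (hx i)
    omega
  have e : {x // x ∈ (Finset.Icc (0 : Fin k → ℕ) c).filter (fun x => ∑ i, x i = n)} ≃
      {P : Fin k → ℕ // ∑ i, P i = m} :=
    { toFun := fun x => ⟨fun i => c i - x.1 i, by
        obtain ⟨x, hx⟩ := x
        simp only [Finset.mem_filter, Finset.mem_Icc] at hx
        obtain ⟨⟨-, hxc⟩, hxs⟩ := hx
        rw [hsum_sub x (fun i => hxc i), hxs, hm]⟩
      invFun := fun y => ⟨fun i => c i - y.1 i, by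
        obtain ⟨y, hy⟩ := y
        have hyc : ∀ i, y i ≤ c i := fun i =>
          le_trans (le_trans (Finset.single_le_sum (f := y) (fun i _ => Nat.zero_le _)
            (Finset.mem_univ i)) (le_of_eq hy)) (hmc i)
        simp only [Finset.mem_filter, Finset.mem_Icc]
        refine ⟨⟨fun i => Nat.zero_le _, fun i => Nat.sub_le _ _⟩, ?_⟩
        rw [hsum_sub y hyc, hy]
        omega⟩
      left_inv := fun x => by
        obtain ⟨x, hx⟩ := x
        simp only [Finset.mem_filter, Finset.mem_Icc] at hx
        ext i
        exact Nat.sub_sub_self (hx.1.2 i)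
      right_inv := fun y => by
        obtain ⟨y, hy⟩ := y
        have hyc : ∀ i, y i ≤ c i := fun i =>
          le_trans (le_trans (Finset.single_le_sum (f := y) (fun i _ => Nat.zero_le _)
            (Finset.mem_univ i)) (le_of_eq hy)) (hmc i)
        ext i
        exact Nat.sub_sub_self (hyc i) }
  have hcard : ((Finset.Icc (0 : Fin k → ℕ) c).filter (fun x => ∑ i, x i = n)).card
      = (k + m - 1).choose m := by
    rw [← Nat.card_eq_finsetCard, Nat.card_congr e,
      Nat.card_congr (Sym.equivNatSumOfFintype (Fin k) m).symm,
      Nat.card_eq_fintype_card, Sym.card_sym_eq_multichoose, Fintype.card_fin,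
      Nat.multichoose_eq]
  rw [hcard]
  clear e hsum_sub
  have h1 : k + m - 1 = (k - 1) + m := Nat.sub_add_comm hk
  have h2 : k - 1 + S - n = (k - 1) + m := by rw [Nat.add_sub_assoc hhigh, hm]
  rw [h1, h2, Nat.add_comm (k-1) m, Nat.choose_symm_add]
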